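/- Fix n ≥ 1, injective ρ-functions ρ^{(k)} for 1 ≤ k ≤ n, and the derived functions f_i (i ≤ n) on increasing (i+1)-tuples from ω_n as defined from the ρ^{(k)}. Then for every infinite A ⊆ ω_n there is an infinite B ⊆ A such that for every i ≤ n the restriction of f_i to increasing (i+1)-tuples from B is min-dependant: if α_0 < … < α_i and β_0 < … < β_i are in B and f_i(α_0,…,α_i) = f_i(β_0,…,β_i), then α_0 = β_0. -/

import Mathlib

/-- `ω_k` as an ordinal (`ω_0 = ω`). -/
noncomputable def omegaOrd (k : ℕ) : Ordinal := (Cardinal.aleph k).ord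

/-- A system of injective ρ-functions: for each `1 ≤ k ≤ n`, `ρ k` is symmetric on
distinct ordinals below `ω_k`, takes values below `ω_{k-1}`, and satisfies (a)
subadditivity, (b) injectivity in the first coordinate, and (c) `ρ(α,β) ≠ ρ(β,γ)`. -/
def IsRhoSystem (n : ℕ) (ρ : ℕ → Ordinal → Ordinal → Ordinal) : Prop :=
  ∀ k : ℕ, 1 ≤ k → k ≤ n →
    (∀ α β, α < omegaOrd k → β < omegaOrd k → α ≠ β → ρ k α β = ρ k β α) ∧
    (∀ α β, α < omegaOrd k → β < omegaOrd k → α ≠ β → ρ k α β < omegaOrd (k - 1)) ∧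
    (∀ α β γ, α < β → β < γ → γ < omegaOrd k →
      ρ k α β ≤ max (ρ k α γ) (ρ k β γ) ∧ ρ k α γ ≤ max (ρ k α β) (ρ k β γ)) ∧
    (∀ α α' β, α < β → α' < β → β < omegaOrd k → α ≠ α' → ρ k α β ≠ ρ k α' β) ∧
    (∀ α β γ, α < β → β < γ → γ < omegaOrd k → ρ k α β ≠ ρ k β γ)

/-- The functions `f_i` derived from the ρ-functions: `f_0(α) = α` and
`f_{i+1}(α_0,…,α_{i+1}) = ρ^{(n-i)}(f_i(α_0,…,α_i), f_i(α_1,…,α_{i+1}))`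
(with value `0` if the two arguments coincide).  A tuple `(α_0,…,α_i)` is
represented by a function `v : ℕ → Ordinal` via its first `i + 1` values. -/
noncomputable def fseq (n : ℕ) (ρ : ℕ → Ordinal → Ordinal → Ordinal) :
    ℕ → (ℕ → Ordinal) → Ordinal
  | 0, v => v 0
  | (i + 1), v =>
      if fseq n ρ i v = fseq n ρ i (fun j => v (j + 1)) then 0
      else ρ (n - i) (fseq n ρ i v) (fseq n ρ i (fun j => v (j + 1)))


lemma fseq_congr (n : ℕ) (ρ : ℕ → Ordinal → Ordinal → Ordinal) :
    ∀ (i : ℕ) (v w : ℕ → Ordinal), (∀ j ≤ i, v j = w j) → fseq n ρ i v = fseq n ρ i w := by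
  intro i
  induction i with
  | zero => intro v w h; simp only [fseq]; exact h 0 le_rfl
  | succ i ih =>
    intro v w h
    have h1 : fseq n ρ i v = fseq n ρ i w := ih v w (fun j hj => h j (by omega))
    have h2 : fseq n ρ i (fun j => v (j+1)) = fseq n ρ i (fun j => w (j+1)) :=
      ih _ _ (fun j hj => h (j+1) (by omega))
    simp only [fseq, h1, h2]

lemma omegaOrd_pos (k : ℕ) : 0 < omegaOrd k := by
  have h1 : Cardinal.aleph0 ≤ Cardinal.aleph k := Cardinal.aleph0_le_aleph k
  have h2 : Ordinal.omega0 ≤ (Cardinal.aleph k).ord := by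
    rw [← Cardinal.ord_aleph0]
    exact Cardinal.ord_le_ord.mpr h1
  exact lt_of_lt_of_le Ordinal.omega0_pos h2

lemma fseq_lt (n : ℕ) (ρ : ℕ → Ordinal → Ordinal → Ordinal) (hρ : IsRhoSystem n ρ) :
    ∀ i, i ≤ n → ∀ v : ℕ → Ordinal, (∀ j ≤ i, v j < omegaOrd n) →
    fseq n ρ i v < omegaOrd (n - i) := by
  intro i
  induction i with
  | zero =>
    intro _ v hv
    simpa only [fseq, Nat.sub_zero] using hv 0 le_rfl
  | succ i ih =>
    intro hi v hv
    have hx := ih (by omega) v (fun j hj => hv j (by omega))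
    have hy := ih (by omega) (fun j => v (j+1)) (fun j hj => hv (j+1) (by omega))
    simp only [fseq]
    split
    · exact omegaOrd_pos _
    · rename_i hne
      have h1 : 1 ≤ n - i := by omega
      have h2 : n - i ≤ n := Nat.sub_le n i
      obtain ⟨_, hb, _⟩ := hρ (n-i) h1 h2
      have he : n - i - 1 = n - (i+1) := by omega
      have hlt := hb _ _ hx hy hne
      rwa [he] at hlt

lemma no_descending (g : ℕ → Ordinal) (h : ∀ k, g (k+1) < g k) : False := by
  have hne : (Set.range g).Nonempty := ⟨g 0, 0, rfl⟩
  obtain ⟨k, hk⟩ := Ordinal.lt_wf.min_mem (Set.range g) hne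
  exact Ordinal.lt_wf.not_lt_min (Set.range g) ⟨k+1, rfl⟩ (hk ▸ h k)

lemma extend_incr (r : ℕ) (σ : ℕ → ℕ) (h : ∀ j < r, σ j < σ (j+1)) :
    ∃ σ' : ℕ → ℕ, StrictMono σ' ∧ ∀ j ≤ r, σ' j = σ j := by
  refine ⟨fun t => if t ≤ r then σ t else σ r + (t - r), ?_, ?_⟩
  · apply strictMono_nat_of_lt_succ
    intro t
    by_cases h1 : t + 1 ≤ r
    · simp only [show t ≤ r by omega, if_true, h1]
      exact h t (by omega)
    · by_cases h2 : t ≤ r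
      · have ht : t = r := by omega
        subst ht
        simp only [le_refl, if_true, h1, if_false]
        omega
      · simp only [h1, h2, if_false]
        omega
  · intro j hj
    simp [hj]

lemma incr_le (r : ℕ) (σ : ℕ → ℕ) (h : ∀ j < r, σ j < σ (j+1)) :
    ∀ a b, a < b → b ≤ r → σ a < σ b := by
  intro a b hab hbr
  obtain ⟨σ', hm, he⟩ := extend_incr r σ h
  rw [← he a (by omega), ← he b hbr]
  exact hm hab

open Classical in
/-- Infinite Ramsey theorem, phrased for colorings of `ℕ → ℕ` tuples that only
depend on the first `m` values. -/
theorem ramseyNat {C : Type} [Finite C] :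
    ∀ (m : ℕ) (c : (ℕ → ℕ) → C), (∀ σ τ : ℕ → ℕ, (∀ j < m, σ j = τ j) → c σ = c τ) →
    ∃ φ : ℕ → ℕ, StrictMono φ ∧
      ∀ σ τ : ℕ → ℕ, StrictMono σ → StrictMono τ → c (φ ∘ σ) = c (φ ∘ τ) := by
  intro m
  induction m with
  | zero =>
    intro c hc
    exact ⟨id, strictMono_id, fun σ τ _ _ => hc _ _ (by omega)⟩
  | succ m ih =>
    intro c hc
    -- cons operation on ℕ-tuples
    set cons : ℕ → (ℕ → ℕ) → (ℕ → ℕ) := fun x f j => if j = 0 then x else f (j - 1) with hcons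
    -- derived coloring
    set d : (ℕ → ℕ) → (ℕ → ℕ) → C := fun ψ σ => c (cons (ψ 0) (fun j => ψ (σ j + 1))) with hd
    have hdc : ∀ ψ : ℕ → ℕ, ∀ σ τ : ℕ → ℕ, (∀ j < m, σ j = τ j) → d ψ σ = d ψ τ := by
      intro ψ σ τ h
      apply hc
      intro j hj
      simp only [hcons]
      rcases Nat.eq_zero_or_pos j with hj0 | hj0
      · simp [hj0]
      · have : j ≠ 0 := by omega
        simp only [this, if_false]
        rw [h (j-1) (by omega)]
    -- the step function
    have step : ∀ ψ : {f : ℕ → ℕ // StrictMono f}, ∃ ψ' : {f : ℕ → ℕ // StrictMono f},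
        (∀ t, ∃ t', t' ≥ 1 ∧ ψ'.1 t = ψ.1 t') ∧
        (∀ σ τ : ℕ → ℕ, StrictMono σ → StrictMono τ →
          c (cons (ψ.1 0) (ψ'.1 ∘ σ)) = c (cons (ψ.1 0) (ψ'.1 ∘ τ))) := by
      rintro ⟨ψ, hψ⟩
      obtain ⟨φ, hφ, hhom⟩ := ih (d ψ) (hdc ψ)
      refine ⟨⟨fun t => ψ (φ t + 1), ?_⟩, ?_, ?_⟩
      · intro a b hab
        exact hψ (by have := hφ hab; omega)
      · intro t; exact ⟨φ t + 1, by omega, rfl⟩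
      · intro σ τ hσ hτ
        have h1 : cons (ψ 0) ((fun t => ψ (φ t + 1)) ∘ σ) = cons (ψ 0) (fun j => ψ ((φ ∘ σ) j + 1)) := rfl
        have h2 : cons (ψ 0) ((fun t => ψ (φ t + 1)) ∘ τ) = cons (ψ 0) (fun j => ψ ((φ ∘ τ) j + 1)) := rfl
        rw [h1, h2]
        exact hhom σ τ hσ hτ
    choose stepF hstep1 hstep2 using step
    -- iterate
    set Ψ : ℕ → {f : ℕ → ℕ // StrictMono f} :=
      fun k => Nat.rec ⟨id, strictMono_id⟩ (fun _ ψ => stepF ψ) k with hΨ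
    have hΨsucc : ∀ k, Ψ (k + 1) = stepF (Ψ k) := fun k => rfl
    set x : ℕ → ℕ := fun k => (Ψ k).1 0 with hx
    -- ranges nested
    have hnest : ∀ k, ∀ t, ∃ t', t' ≥ 1 ∧ (Ψ (k+1)).1 t = (Ψ k).1 t' := by
      intro k t
      rw [hΨsucc]
      exact hstep1 (Ψ k) t
    have hnest' : ∀ k l, k ≤ l → ∀ t, ∃ t', (Ψ l).1 t = (Ψ k).1 t' := by
      intro k l hkl
      induction l with
      | zero =>
        intro t
        have hk0 : k = 0 := by omega
        exact ⟨t, by rw [hk0]⟩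
      | succ l ihl =>
        intro t
        rcases Nat.eq_or_lt_of_le hkl with h | h
        · exact ⟨t, by rw [h]⟩
        · obtain ⟨t1, _, ht1⟩ := hnest l t
          obtain ⟨t2, ht2⟩ := ihl (by omega) t1
          exact ⟨t2, by rw [ht1, ht2]⟩
    have hxmem : ∀ k j, k < j → ∃ t, (Ψ (k+1)).1 t = x j := by
      intro k j hkj
      obtain ⟨t, ht⟩ := hnest' (k+1) j (by omega) 0
      exact ⟨t, ht.symm⟩
    -- x strictly increasing
    have hxmono : StrictMono x := by
      apply strictMono_nat_of_lt_succ
      intro k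
      obtain ⟨t', ht'1, ht'2⟩ := hnest k 0
      show (Ψ k).1 0 < (Ψ (k+1)).1 0
      rw [ht'2]
      exact (Ψ k).2 (show 0 < t' by omega)
    -- homogeneity at level k
    set K : ℕ → C := fun k => c (cons (x k) ((Ψ (k+1)).1 ∘ id)) with hK
    have hKhom : ∀ k, ∀ σ : ℕ → ℕ, StrictMono σ →
        c (cons (x k) ((Ψ (k+1)).1 ∘ σ)) = K k := by
      intro k σ hσ
      have := hstep2 (Ψ k) σ id hσ strictMono_id
      rw [hΨsucc]
      exact this
    -- pigeonhole on K
    obtain ⟨d0, hd0⟩ := Finite.exists_infinite_fiber K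
    have hinf : (setOf (fun k => K k = d0)).Infinite := by
      rw [← Set.infinite_coe_iff]
      exact hd0
    set θ : ℕ → ℕ := Nat.nth (fun k => K k = d0) with hθ
    have hθmono : StrictMono θ := Nat.nth_strictMono hinf
    have hθmem : ∀ k, K (θ k) = d0 := Nat.nth_mem_of_infinite hinf
    refine ⟨fun t => x (θ t), hxmono.comp hθmono, ?_⟩
    -- final homogeneity
    have key : ∀ σ : ℕ → ℕ, StrictMono σ → c ((fun t => x (θ t)) ∘ σ) = d0 := by
      intro σ hσ
      set k := θ (σ 0) with hk
      -- choose preimages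
      have hpre : ∀ j : ℕ, ∃ t, (Ψ (k+1)).1 t = x (θ (σ (j+1))) := by
        intro j
        apply hxmem
        exact hθmono (hσ (Nat.succ_pos j))
      choose τ' hτ' using hpre
      have hτ'mono : StrictMono τ' := by
        intro a b hab
        have h1 : (Ψ (k+1)).1 (τ' a) < (Ψ (k+1)).1 (τ' b) := by
          rw [hτ' a, hτ' b]
          exact hxmono (hθmono (hσ (by omega)))
        exact ((Ψ (k+1)).2.lt_iff_lt).mp h1
      have heq : c ((fun t => x (θ t)) ∘ σ) = c (cons (x k) ((Ψ (k+1)).1 ∘ τ')) := by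
        apply hc
        intro j hj
        rcases Nat.eq_zero_or_pos j with hj0 | hj0
        · simp [hj0, hcons, hk]
        · have hjne : j ≠ 0 := by omega
          simp only [Function.comp, hcons, hjne, if_false]
          rw [hτ' (j-1)]
          have hje : j - 1 + 1 = j := by omega
          rw [hje]
      rw [heq, hKhom k τ' hτ'mono]
      exact hθmem (σ 0)
    intro σ τ hσ hτ
    rw [key σ hσ, key τ hτ]

def MinDep (n : ℕ) (ρ : ℕ → Ordinal → Ordinal → Ordinal) (i : ℕ) (b : ℕ → Ordinal) : Prop :=
  ∀ σ τ : ℕ → ℕ, (∀ j < i, σ j < σ (j+1)) → (∀ j < i, τ j < τ (j+1)) →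
    fseq n ρ i (fun k => b (σ k)) = fseq n ρ i (fun k => b (τ k)) → σ 0 = τ 0

lemma MinDep.comp {n : ℕ} {ρ : ℕ → Ordinal → Ordinal → Ordinal} {i : ℕ} {b : ℕ → Ordinal}
    (h : MinDep n ρ i b) {φ : ℕ → ℕ} (hφ : StrictMono φ) :
    MinDep n ρ i (fun t => b (φ t)) := by
  intro σ τ hσ hτ heq
  have := h (fun k => φ (σ k)) (fun k => φ (τ k)) (fun j hj => hφ (hσ j hj))
    (fun j hj => hφ (hτ j hj)) heq
  exact hφ.injective this

lemma mindep_step (n : ℕ) (ρ : ℕ → Ordinal → Ordinal → Ordinal) (hρ : IsRhoSystem n ρ)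
    (i : ℕ) (hi : i + 1 ≤ n) (b : ℕ → Ordinal) (hb : StrictMono b)
    (hbA : ∀ k, b k < omegaOrd n) (hmd : MinDep n ρ i b) :
    ∃ φ : ℕ → ℕ, StrictMono φ ∧ MinDep n ρ (i+1) (fun t => b (φ t)) := by
  classical
  -- Round 1: make the "shift" comparison homogeneous
  set c1 : (ℕ → ℕ) → Bool × Bool := fun σ =>
    (decide (fseq n ρ i (fun j => b (σ j)) = fseq n ρ i (fun j => b (σ (j+1)))),
     decide (fseq n ρ i (fun j => b (σ j)) < fseq n ρ i (fun j => b (σ (j+1))))) with hc1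
  have hc1dep : ∀ σ τ : ℕ → ℕ, (∀ j < i + 2, σ j = τ j) → c1 σ = c1 τ := by
    intro σ τ h
    have e1 : fseq n ρ i (fun j => b (σ j)) = fseq n ρ i (fun j => b (τ j)) :=
      fseq_congr n ρ i _ _ (fun j hj => by rw [h j (by omega)])
    have e2 : fseq n ρ i (fun j => b (σ (j+1))) = fseq n ρ i (fun j => b (τ (j+1))) :=
      fseq_congr n ρ i _ _ (fun j hj => by rw [h (j+1) (by omega)])
    simp only [hc1, e1, e2]
  obtain ⟨φ1, hφ1, hhom1⟩ := ramseyNat (i+2) c1 hc1dep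
  set b1 : ℕ → Ordinal := fun t => b (φ1 t) with hb1
  have hb1mono : StrictMono b1 := hb.comp hφ1
  have hb1A : ∀ k, b1 k < omegaOrd n := fun k => hbA _
  have hmd1 : MinDep n ρ i b1 := hmd.comp hφ1
  -- the homogeneous color
  have hcol : ∀ σ : ℕ → ℕ, StrictMono σ → c1 (φ1 ∘ σ) = c1 (φ1 ∘ id) :=
    fun σ hσ => hhom1 σ id hσ strictMono_id
  -- first component is false
  have hqne : ∀ σ : ℕ → ℕ, StrictMono σ →
      fseq n ρ i (fun j => b1 (σ j)) ≠ fseq n ρ i (fun j => b1 (σ (j+1))) := by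
    intro σ hσ hcontra
    have h1 : (c1 (φ1 ∘ σ)).1 = true := by
      simp only [hc1, Function.comp]
      exact decide_eq_true hcontra
    have h2 : (c1 (φ1 ∘ id)).1 = true := by rw [← hcol σ hσ]; exact h1
    have h3 : fseq n ρ i (fun j => b1 (j : ℕ)) = fseq n ρ i (fun j => b1 (j+1)) := by
      have := h2
      simp only [hc1, Function.comp, id] at this
      exact of_decide_eq_true this
    have := hmd1 id (fun k => k + 1) (fun j hj => by simp) (fun j hj => by simp) h3
    simp at this
  -- second component is true : the shift property
  have shift1 : ∀ σ : ℕ → ℕ, StrictMono σ →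
      fseq n ρ i (fun j => b1 (σ j)) < fseq n ρ i (fun j => b1 (σ (j+1))) := by
    intro σ hσ
    by_contra hcon
    -- then the homogeneous color has second component false, giving a descending sequence
    have h1 : (c1 (φ1 ∘ σ)).2 = false := by
      simp only [hc1, Function.comp]
      exact decide_eq_false hcon
    have h2 : ∀ τ : ℕ → ℕ, StrictMono τ → (c1 (φ1 ∘ τ)).2 = false := by
      intro τ hτ
      rw [hcol τ hτ, ← hcol σ hσ]
      exact h1
    have hdesc : ∀ k : ℕ, fseq n ρ i (fun j => b1 (j + (k+1))) < fseq n ρ i (fun j => b1 (j + k)) := by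
      intro k
      have hτ : StrictMono (fun t : ℕ => t + k) := fun s t h => by simpa using Nat.add_lt_add_right h k
      have hf := h2 _ hτ
      have hn := hqne _ hτ
      simp only [hc1, Function.comp] at hf
      have hle : ¬ fseq n ρ i (fun j => b1 (j + k)) < fseq n ρ i (fun j => b1 (j + 1 + k)) :=
        of_decide_eq_false hf
      have hne : fseq n ρ i (fun j => b1 (j + k)) ≠ fseq n ρ i (fun j => b1 (j + 1 + k)) := hn
      have efun : (fun j => b1 (j + 1 + k)) = (fun j => b1 (j + (k+1))) := by
        funext j
        congr 1
        omega
      have e : fseq n ρ i (fun j => b1 (j + 1 + k)) = fseq n ρ i (fun j => b1 (j + (k+1))) := by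
        rw [efun]
      rw [← e]
      exact lt_of_le_of_ne (not_lt.mp hle) (Ne.symm hne)
    exact no_descending _ hdesc
  -- shift property for finitely-increasing tuples
  have shiftF : ∀ σ : ℕ → ℕ, (∀ j < i+1, σ j < σ (j+1)) →
      fseq n ρ i (fun j => b1 (σ j)) < fseq n ρ i (fun j => b1 (σ (j+1))) := by
    intro σ hσ
    obtain ⟨σ', hm, he⟩ := extend_incr (i+1) σ hσ
    have e1 : fseq n ρ i (fun j => b1 (σ j)) = fseq n ρ i (fun j => b1 (σ' j)) :=
      fseq_congr n ρ i _ _ (fun j hj => by rw [he j (by omega)])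
    have e2 : fseq n ρ i (fun j => b1 (σ (j+1))) = fseq n ρ i (fun j => b1 (σ' (j+1))) :=
      fseq_congr n ρ i _ _ (fun j hj => by rw [he (j+1) (by omega)])
    rw [e1, e2]
    exact shift1 σ' hm
  -- Round 2
  set N := 2*i+4 with hN
  set ext : (Fin (i+2) → Fin N) → ℕ → ℕ :=
    fun P j => if h : j < i+2 then (P ⟨j,h⟩ : ℕ) else 0 with hext
  have hextlt : ∀ (P : Fin (i+2) → Fin N) (j : ℕ), ext P j < N := by
    intro P j
    simp only [hext]
    split
    · exact (P _).isLt
    · omega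
  have hextval : ∀ (P : Fin (i+2) → Fin N) (j : ℕ) (hj : j < i+2), ext P j = (P ⟨j, hj⟩ : ℕ) := by
    intro P j hj
    simp only [hext, hj, dif_pos]
  set c2 : (ℕ → ℕ) → ((Fin (i+2) → Fin N) × (Fin (i+2) → Fin N)) → Bool := fun σ pq =>
    decide (fseq n ρ (i+1) (fun j => b1 (σ (ext pq.1 j))) =
            fseq n ρ (i+1) (fun j => b1 (σ (ext pq.2 j)))) with hc2
  have hc2dep : ∀ σ τ : ℕ → ℕ, (∀ j < N, σ j = τ j) → c2 σ = c2 τ := by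
    intro σ τ h
    funext pq
    have keyf : ∀ P : Fin (i+2) → Fin N,
        (fun j => b1 (σ (ext P j))) = (fun j => b1 (τ (ext P j))) := by
      intro P; funext j; rw [h _ (hextlt P j)]
    simp only [hc2, keyf pq.1, keyf pq.2]
  obtain ⟨φ2, hφ2, hhom2⟩ := ramseyNat N c2 hc2dep
  set bb : ℕ → Ordinal := fun t => b1 (φ2 t) with hbb
  have hbbmono : StrictMono bb := hb1mono.comp hφ2
  have hbbA : ∀ k, bb k < omegaOrd n := fun k => hb1A _
  have hmd2 : MinDep n ρ i bb := hmd1.comp hφ2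
  have shiftbb : ∀ σ : ℕ → ℕ, (∀ j < i+1, σ j < σ (j+1)) →
      fseq n ρ i (fun j => bb (σ j)) < fseq n ρ i (fun j => bb (σ (j+1))) := by
    intro σ hσ
    exact shiftF (fun t => φ2 (σ t)) (fun j hj => hφ2 (hσ j hj))
  refine ⟨fun t => φ1 (φ2 t), hφ1.comp hφ2, ?_⟩
  have key : ∀ σ τ : ℕ → ℕ, (∀ j < i+1, σ j < σ (j+1)) → (∀ j < i+1, τ j < τ (j+1)) →
      fseq n ρ (i+1) (fun k => bb (σ k)) = fseq n ρ (i+1) (fun k => bb (τ k)) →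
      σ 0 < τ 0 → False := by
    intro σ τ hσ hτ heq h0
    have hσlt : ∀ j, 0 < j → j < i+2 → σ 0 < σ j := fun j h1 h2 =>
      incr_le (i+1) σ hσ 0 j h1 (by omega)
    have hτlt : ∀ j, j < i+2 → σ 0 < τ j := by
      intro j hj
      rcases Nat.eq_zero_or_pos j with h | h
      · rw [h]; exact h0
      · exact h0.trans (incr_le (i+1) τ hτ 0 j h (by omega))
    set s : Finset ℕ := ((Finset.range (i+2)).image σ) ∪ ((Finset.range (i+2)).image τ) with hs
    have hσmem : ∀ j, j < i+2 → σ j ∈ s := fun j hj =>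
      Finset.mem_union_left _ (Finset.mem_image.mpr ⟨j, Finset.mem_range.mpr hj, rfl⟩)
    have hτmem : ∀ j, j < i+2 → τ j ∈ s := fun j hj =>
      Finset.mem_union_right _ (Finset.mem_image.mpr ⟨j, Finset.mem_range.mpr hj, rfl⟩)
    have hsne : s.Nonempty := ⟨σ 0, hσmem 0 (by omega)⟩
    have hsmin : ∀ x ∈ s, σ 0 ≤ x := by
      intro x hx
      rcases Finset.mem_union.mp hx with h | h
      · obtain ⟨j, hj, rfl⟩ := Finset.mem_image.mp h
        rcases Nat.eq_zero_or_pos j with h' | h'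
        · rw [h']
        · exact le_of_lt (hσlt j h' (Finset.mem_range.mp hj))
      · obtain ⟨j, hj, rfl⟩ := Finset.mem_image.mp h
        exact le_of_lt (hτlt j (Finset.mem_range.mp hj))
    have hcard : s.card ≤ N := by
      have h0' := Finset.card_union_le ((Finset.range (i+2)).image σ) ((Finset.range (i+2)).image τ)
      rw [← hs] at h0'
      have h1 := Finset.card_image_le (s := Finset.range (i+2)) (f := σ)
      have h2 := Finset.card_image_le (s := Finset.range (i+2)) (f := τ)
      simp only [Finset.card_range] at h1 h2
      omega
    set iso := s.orderIsoOfFin rfl with hiso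
    set pos : ℕ → ℕ := fun x => if hx : x ∈ s then ((iso.symm ⟨x, hx⟩ : Fin s.card) : ℕ) else 0
      with hposdef
    have hposcard : ∀ x, x ∈ s → pos x < s.card := by
      intro x hx
      simp only [hposdef, hx, dif_pos]
      exact (iso.symm ⟨x, hx⟩).isLt
    have hposmono : ∀ x y, x ∈ s → y ∈ s → x < y → pos x < pos y := by
      intro x y hx hy hxy
      simp only [hposdef, hx, hy, dif_pos]
      have : (⟨x, hx⟩ : {z // z ∈ s}) < ⟨y, hy⟩ := Subtype.mk_lt_mk.mpr hxy
      exact iso.symm.lt_iff_lt.mpr this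
    set Z : ℕ → ℕ := fun t => if h : t < s.card then ((iso ⟨t, h⟩ : {z // z ∈ s}) : ℕ)
      else (s.max' hsne) + (t + 1 - s.card) with hZdef
    have hZmem : ∀ t (h : t < s.card), Z t = ((iso ⟨t, h⟩ : {z // z ∈ s}) : ℕ) := by
      intro t h
      simp only [hZdef, h, dif_pos]
    have hZpos : ∀ x (hx : x ∈ s), Z (pos x) = x := by
      intro x hx
      rw [hZmem (pos x) (hposcard x hx)]
      have : pos x = ((iso.symm ⟨x, hx⟩ : Fin s.card) : ℕ) := by simp only [hposdef, hx, dif_pos]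
      have h2 : (⟨pos x, hposcard x hx⟩ : Fin s.card) = iso.symm ⟨x, hx⟩ := by
        apply Fin.ext
        exact this
      rw [h2, OrderIso.apply_symm_apply]
    have hZmono : StrictMono Z := by
      apply strictMono_nat_of_lt_succ
      intro t
      by_cases h1 : t + 1 < s.card
      · rw [hZmem t (by omega), hZmem (t+1) h1]
        have : (⟨t, by omega⟩ : Fin s.card) < ⟨t+1, h1⟩ := by
          simp [Fin.lt_def]
        have := iso.lt_iff_lt.mpr this
        exact this
      · by_cases h2 : t < s.card
        · rw [hZmem t h2]
          have hle : ((iso ⟨t, h2⟩ : {z // z ∈ s}) : ℕ) ≤ s.max' hsne :=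
            Finset.le_max' s _ (iso ⟨t, h2⟩).2
        
          have hZt1 : Z (t+1) = s.max' hsne + (t + 2 - s.card) := by
            simp only [hZdef, dif_neg h1]
          rw [hZt1]
          omega
        · have hZt : Z t = s.max' hsne + (t + 1 - s.card) := by
            simp only [hZdef, dif_neg h2]
          have hZt1 : Z (t+1) = s.max' hsne + (t + 2 - s.card) := by
            simp only [hZdef, dif_neg h1]
          rw [hZt, hZt1]
          omega
    have hpos0 : pos (σ 0) = 0 := by
      by_contra hne
      have hcd0 : 0 < s.card := Finset.card_pos.mpr hsne
      have h1 : σ 0 ≤ ((iso ⟨0, hcd0⟩ : {z // z ∈ s}) : ℕ) := hsmin _ (iso ⟨0, hcd0⟩).2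
      have h2 : Z 0 < Z (pos (σ 0)) := hZmono (by omega)
      rw [hZpos (σ 0) (hσmem 0 (by omega)), hZmem 0 hcd0] at h2
      omega
    -- index patterns
    set P : Fin (i+2) → Fin N := fun j => ⟨pos (σ j.val),
      lt_of_lt_of_le (hposcard _ (hσmem j.val j.isLt)) hcard⟩ with hP
    set Q : Fin (i+2) → Fin N := fun j => ⟨pos (τ j.val),
      lt_of_lt_of_le (hposcard _ (hτmem j.val j.isLt)) hcard⟩ with hQ
    have hextP : ∀ (j : ℕ) (hj : j < i+2), ext P j = pos (σ j) := fun j hj => hextval P j hj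
    have hextQ : ∀ (j : ℕ) (hj : j < i+2), ext Q j = pos (τ j) := fun j hj => hextval Q j hj
    have hQ1 : ∀ (j : ℕ), j < i+2 → 1 ≤ ext Q j := by
      intro j hj
      rw [hextQ j hj]
      have := hposmono (σ 0) (τ j) (hσmem 0 (by omega)) (hτmem j hj) (hτlt j hj)
      omega
    have hP1 : ∀ (j : ℕ), 0 < j → j < i+2 → 1 ≤ ext P j := by
      intro j h1 hj
      rw [hextP j hj]
      have := hposmono (σ 0) (σ j) (hσmem 0 (by omega)) (hσmem j hj) (hσlt j h1 hj)
      omega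
    have hextP0 : ext P 0 = 0 := by rw [hextP 0 (by omega), hpos0]
    -- the color of (P, Q) is `true`
    have hreal : c2 (φ2 ∘ Z) (P, Q) = true := by
      simp only [hc2]
      apply decide_eq_true
      have eP : (fseq n ρ (i+1) (fun j => b1 ((φ2 ∘ Z) (ext P j)))) =
          fseq n ρ (i+1) (fun k => bb (σ k)) := by
        apply fseq_congr
        intro j hj
        show bb (Z (ext P j)) = bb (σ j)
        rw [hextP j (by omega), hZpos (σ j) (hσmem j (by omega))]
      have eQ : (fseq n ρ (i+1) (fun j => b1 ((φ2 ∘ Z) (ext Q j)))) =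
          fseq n ρ (i+1) (fun k => bb (τ k)) := by
        apply fseq_congr
        intro j hj
        show bb (Z (ext Q j)) = bb (τ j)
        rw [hextQ j (by omega), hZpos (τ j) (hτmem j (by omega))]
      rw [eP, eQ]
      exact heq
    have hcolor : ∀ w : ℕ → ℕ, StrictMono w → c2 (φ2 ∘ w) (P, Q) = true := by
      intro w hw
      rw [hhom2 w Z hw hZmono]
      exact hreal
    -- the two variations
    set w1 : ℕ → ℕ := fun t => Z (t+1) with hw1def
    have hw1 : StrictMono w1 := fun a b h => hZmono (by omega)
    set w2 : ℕ → ℕ := fun t => if t = 0 then Z 0 else Z (t+1) with hw2def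
    have hw2 : StrictMono w2 := by
      apply strictMono_nat_of_lt_succ
      intro t
      rcases Nat.eq_zero_or_pos t with h | h
      · subst h
        simp only [hw2def, if_pos rfl, if_neg (by omega : (1:ℕ) ≠ 0)]
        exact hZmono (by omega)
      · simp only [hw2def, if_neg (by omega : t ≠ 0), if_neg (by omega : t + 1 ≠ 0)]
        exact hZmono (by omega)
    have hw12 : ∀ t, 1 ≤ t → w1 t = w2 t := by
      intro t ht
      simp only [hw1def, hw2def, if_neg (by omega : t ≠ 0)]
    have E1 : fseq n ρ (i+1) (fun j => bb (w1 (ext P j))) =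
        fseq n ρ (i+1) (fun j => bb (w1 (ext Q j))) := by
      have := hcolor w1 hw1
      simp only [hc2] at this
      exact of_decide_eq_true this
    have E2 : fseq n ρ (i+1) (fun j => bb (w2 (ext P j))) =
        fseq n ρ (i+1) (fun j => bb (w2 (ext Q j))) := by
      have := hcolor w2 hw2
      simp only [hc2] at this
      exact of_decide_eq_true this
    have ET : fseq n ρ (i+1) (fun j => bb (w1 (ext Q j))) =
        fseq n ρ (i+1) (fun j => bb (w2 (ext Q j))) := by
      apply fseq_congr
      intro j hj
      rw [hw12 _ (hQ1 j (by omega))]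
    have ES : fseq n ρ (i+1) (fun j => bb (w1 (ext P j))) =
        fseq n ρ (i+1) (fun j => bb (w2 (ext P j))) := by
      rw [E1, ET, ← E2]
    -- set up the ρ-values
    set u1 : ℕ → ℕ := fun t => w1 (ext P t) with hu1def
    set u2 : ℕ → ℕ := fun t => w2 (ext P t) with hu2def
    have hPmono : ∀ j, j < i+1 → ext P j < ext P (j+1) := by
      intro j hj
      rw [hextP j (by omega), hextP (j+1) (by omega)]
      exact hposmono _ _ (hσmem j (by omega)) (hσmem (j+1) (by omega)) (hσ j hj)
    have hu1 : ∀ j, j < i+1 → u1 j < u1 (j+1) := fun j hj => hw1 (hPmono j hj)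
    have hu2 : ∀ j, j < i+1 → u2 j < u2 (j+1) := fun j hj => hw2 (hPmono j hj)
    set x1 := fseq n ρ i (fun j => bb (u1 j)) with hx1def
    set y1 := fseq n ρ i (fun j => bb (u1 (j+1))) with hy1def
    set x2 := fseq n ρ i (fun j => bb (u2 j)) with hx2def
    set y2 := fseq n ρ i (fun j => bb (u2 (j+1))) with hy2def
    have hx1y1 : x1 < y1 := shiftbb u1 hu1
    have hx2y2 : x2 < y2 := shiftbb u2 hu2
    have hy12 : y1 = y2 := by
      apply fseq_congr
      intro j hj
      show bb (u1 (j+1)) = bb (u2 (j+1))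
      rw [hu1def, hu2def]
      simp only
      rw [hw12 _ (hP1 (j+1) (by omega) (by omega))]
    have hx12 : x1 ≠ x2 := by
      intro hcon
      have := hmd2 u1 u2 (fun j hj => hu1 j (by omega)) (fun j hj => hu2 j (by omega)) hcon
      have hu10 : u1 0 = Z 1 := by rw [hu1def]; simp only; rw [hextP0]
      have hu20 : u2 0 = Z 0 := by rw [hu2def]; simp only; rw [hextP0]; rfl
      rw [hu10, hu20] at this
      have := hZmono (show (0:ℕ) < 1 by omega)
      omega
    -- unfold fseq at level i+1
    have e1 : fseq n ρ (i+1) (fun j => bb (u1 j)) = ρ (n-i) x1 y1 := by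
      simp only [fseq]
      rw [if_neg (ne_of_lt hx1y1)]
    have e2 : fseq n ρ (i+1) (fun j => bb (u2 j)) = ρ (n-i) x2 y2 := by
      simp only [fseq]
      rw [if_neg (ne_of_lt hx2y2)]
    have ES' : ρ (n-i) x1 y1 = ρ (n-i) x2 y2 := by
      rw [← e1, ← e2]
      exact ES
    rw [← hy12] at ES' hx2y2
    obtain ⟨_, _, _, hb4, _⟩ := hρ (n-i) (by omega) (Nat.sub_le n i)
    have hy1lt : y1 < omegaOrd (n - i) := by
      rw [hy1def]
      exact fseq_lt n ρ hρ i (by omega) _ (fun j hj => hbbA _)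
    exact hb4 x1 x2 y1 hx1y1 hx2y2 hy1lt hx12 ES'
  intro σ τ hσ hτ heq
  rcases lt_trichotomy (σ 0) (τ 0) with h | h | h
  · exact absurd h (fun h' => key σ τ hσ hτ heq h')
  · exact h
  · exact absurd h (fun h' => key τ σ hτ hσ heq.symm h')


/-- For every infinite `A ⊆ ω_n` there is an infinite `B ⊆ A` on which every `f_i`
(`i ≤ n`) is min-dependant: if `α_0 < … < α_i` and `β_0 < … < β_i` are in `B` and
`f_i(α_0,…,α_i) = f_i(β_0,…,β_i)`, then `α_0 = β_0`. -/
theorem stmt6 (n : ℕ) (hn : 1 ≤ n) (ρ : ℕ → Ordinal → Ordinal → Ordinal)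
    (hρ : IsRhoSystem n ρ)
    (A : Set Ordinal) (hA : A ⊆ Set.Iio (omegaOrd n)) (hAinf : A.Infinite) :
    ∃ B ⊆ A, B.Infinite ∧
      ∀ i ≤ n, ∀ v w : ℕ → Ordinal,
        (∀ j, j ≤ i → v j ∈ B) → (∀ j, j < i → v j < v (j + 1)) →
        (∀ j, j ≤ i → w j ∈ B) → (∀ j, j < i → w j < w (j + 1)) →
        fseq n ρ i v = fseq n ρ i w → v 0 = w 0 := by
  classical
  -- an increasing ω-sequence in A
  set a : ℕ → Ordinal := fun k => Nat.rec (Ordinal.lt_wf.min A hAinf.nonempty)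
    (fun _ x => if h : (A ∩ Set.Ioi x).Nonempty then Ordinal.lt_wf.min _ h else x) k with ha
  have hstep : ∀ k, a (k+1) =
      if h : (A ∩ Set.Ioi (a k)).Nonempty then Ordinal.lt_wf.min _ h else a k := fun k => rfl
  have hinv : ∀ k, a k ∈ A ∧ (A ∩ Set.Iic (a k)).Finite ∧ a k < a (k+1) := by
    have hne : ∀ x : Ordinal, (A ∩ Set.Iic x).Finite → (A ∩ Set.Ioi x).Nonempty := by
      intro x hfin
      have hinf2 : (A \ (A ∩ Set.Iic x)).Infinite := hAinf.diff hfin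
      obtain ⟨y, hyA, hy2⟩ := hinf2.nonempty
      refine ⟨y, hyA, ?_⟩
      simp only [Set.mem_Ioi]
      by_contra hc
      exact hy2 ⟨hyA, not_lt.mp hc⟩
    have base : a 0 ∈ A ∧ (A ∩ Set.Iic (a 0)).Finite := by
      constructor
      · exact Ordinal.lt_wf.min_mem A hAinf.nonempty
      · apply Set.Finite.subset (Set.finite_singleton (a 0))
        rintro x ⟨hxA, hxle⟩
        have h1 := Ordinal.lt_wf.not_lt_min A hxA
        have : x = a 0 := le_antisymm hxle (not_lt.mp h1)
        simp [this]
    have ind : ∀ k, a k ∈ A ∧ (A ∩ Set.Iic (a k)).Finite →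
        (a k < a (k+1) ∧ (a (k+1) ∈ A ∧ (A ∩ Set.Iic (a (k+1))).Finite)) := by
      intro k ⟨hkA, hkF⟩
      have hne' := hne (a k) hkF
      have hval : a (k+1) = Ordinal.lt_wf.min (A ∩ Set.Ioi (a k)) hne' := by
        rw [hstep k, dif_pos hne']
      have hmem := Ordinal.lt_wf.min_mem (A ∩ Set.Ioi (a k)) hne'
      rw [← hval] at hmem
      obtain ⟨hA1, hA2⟩ := hmem
      refine ⟨hA2, hA1, ?_⟩
      apply Set.Finite.subset (hkF.union (Set.finite_singleton (a (k+1))))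
      rintro x ⟨hxA, hxle⟩
      by_cases hxk : x ≤ a k
      · exact Set.mem_union_left _ ⟨hxA, hxk⟩
      · have hxIoi : x ∈ A ∩ Set.Ioi (a k) := ⟨hxA, not_le.mp hxk⟩
        have h2 := Ordinal.lt_wf.not_lt_min (A ∩ Set.Ioi (a k)) hxIoi
        rw [← hval] at h2
        have : x = a (k+1) := le_antisymm hxle (not_lt.mp h2)
        exact Set.mem_union_right _ (by simp [this])
    intro k
    induction k with
    | zero => exact ⟨base.1, base.2, (ind 0 base).1⟩
    | succ k ihk =>
      have h := ind k ⟨ihk.1, ihk.2.1⟩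
      exact ⟨h.2.1, h.2.2, (ind (k+1) h.2).1⟩
  have haA : ∀ k, a k ∈ A := fun k => (hinv k).1
  have hamono : StrictMono a := strictMono_nat_of_lt_succ (fun k => (hinv k).2.2)
  -- main induction
  have main : ∀ i, i ≤ n → ∃ ψ : ℕ → ℕ, StrictMono ψ ∧
      ∀ j ≤ i, MinDep n ρ j (fun t => a (ψ t)) := by
    intro i
    induction i with
    | zero =>
      intro _
      refine ⟨id, strictMono_id, ?_⟩
      intro j hj
      have hj0 : j = 0 := by omega
      subst hj0
      intro σ τ _ _ heq
      simp only [fseq] at heq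
      exact hamono.injective heq
    | succ i ih =>
      intro hi
      obtain ⟨ψ, hψ, hmd⟩ := ih (by omega)
      obtain ⟨φ, hφ, hmd'⟩ := mindep_step n ρ hρ i hi (fun t => a (ψ t)) (hamono.comp hψ)
        (fun k => hA (haA _)) (hmd i le_rfl)
      refine ⟨fun t => ψ (φ t), hψ.comp hφ, ?_⟩
      intro j hj
      rcases Nat.lt_or_ge j (i+1) with h | h
      · exact (hmd j (by omega)).comp hφ
      · have hje : j = i + 1 := by omega
        subst hje
        exact hmd'
  obtain ⟨ψ, hψ, hmdall⟩ := main n le_rfl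
  set bf : ℕ → Ordinal := fun t => a (ψ t) with hbf
  have hbfmono : StrictMono bf := hamono.comp hψ
  refine ⟨Set.range bf, ?_, ?_, ?_⟩
  · rintro x ⟨t, rfl⟩
    exact haA (ψ t)
  · exact Set.infinite_range_of_injective hbfmono.injective
  · intro i hi v w hv hvi hw hwi heq
    set σ : ℕ → ℕ := fun j => if h : ∃ t, bf t = v j then h.choose else 0 with hσdef
    set τ : ℕ → ℕ := fun j => if h : ∃ t, bf t = w j then h.choose else 0 with hτdef
    have hσval : ∀ j, j ≤ i → bf (σ j) = v j := by
      intro j hj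
      obtain ⟨t, ht⟩ := hv j hj
      have h : ∃ t, bf t = v j := ⟨t, ht⟩
      simp only [hσdef, dif_pos h]
      exact h.choose_spec
    have hτval : ∀ j, j ≤ i → bf (τ j) = w j := by
      intro j hj
      obtain ⟨t, ht⟩ := hw j hj
      have h : ∃ t, bf t = w j := ⟨t, ht⟩
      simp only [hτdef, dif_pos h]
      exact h.choose_spec
    have hσinc : ∀ j, j < i → σ j < σ (j+1) := by
      intro j hj
      have h := hvi j hj
      rw [← hσval j (by omega), ← hσval (j+1) (by omega)] at h
      exact hbfmono.lt_iff_lt.mp h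
    have hτinc : ∀ j, j < i → τ j < τ (j+1) := by
      intro j hj
      have h := hwi j hj
      rw [← hτval j (by omega), ← hτval (j+1) (by omega)] at h
      exact hbfmono.lt_iff_lt.mp h
    have heq' : fseq n ρ i (fun k => bf (σ k)) = fseq n ρ i (fun k => bf (τ k)) := by
      have e1 : fseq n ρ i (fun k => bf (σ k)) = fseq n ρ i v :=
        fseq_congr n ρ i _ _ (fun j hj => hσval j hj)
      have e2 : fseq n ρ i (fun k => bf (τ k)) = fseq n ρ i w :=
        fseq_congr n ρ i _ _ (fun j hj => hτval j hj)
      rw [e1, e2]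
      exact heq
    have h0 := hmdall i hi σ τ hσinc hτinc heq'
    rw [← hσval 0 (by omega), ← hτval 0 (by omega), h0]
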